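/- Let η ∈ L²(ℝ³×ℝ³) be a symmetric real kernel with ‖η‖ ≤ 1/2, and define sinh_η = Σ_{k≥0} η^{(2k+1)}/(2k+1)!, cosh_η = Σ_{k≥0} η^{(2k)}/(2k)! (with η^{(0)} = id), p_η = sinh_η − η, r_η = cosh_η − id. If moreover ‖η(x,·)‖ ≤ K φ(x) pointwise for a bounded nonnegative φ and constant K, then p_η and r_η are Hilbert–Schmidt with ‖p_η‖_{HS}, ‖r_η‖_{HS} ≤ C‖η‖_{HS}², and their kernels satisfy |p_η(x,y)|, |r_η(x,y)| ≤ C K² φ(x) φ(y) almost everywhere, with C a universal constant. -/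

import Mathlib

open MeasureTheory Real Filter
open scoped ENNReal NNReal

section Aux
variable {X Y : Type*} [MeasurableSpace X] [MeasurableSpace Y]

lemma SCaux.ae_fst {μ : Measure X} {ν : Measure Y} [SFinite μ] [SFinite ν] {P : X → Prop}
    (h : ∀ᵐ x ∂μ, P x) : ∀ᵐ z ∂μ.prod ν, P z.1 :=
  Measure.quasiMeasurePreserving_fst.tendsto_ae.eventually h

lemma SCaux.ae_snd {μ : Measure X} {ν : Measure Y} [SFinite μ] [SFinite ν] {P : Y → Prop}
    (h : ∀ᵐ y ∂ν, P y) : ∀ᵐ z ∂μ.prod ν, P z.2 :=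
  Measure.quasiMeasurePreserving_snd.tendsto_ae.eventually h

lemma SCaux.ae_ae_snd {μ : Measure X} {ν : Measure Y} [SFinite μ] [SFinite ν] {P : X × Y → Prop}
    (h : ∀ᵐ z ∂μ.prod ν, P z) : ∀ᵐ y ∂ν, ∀ᵐ x ∂μ, P (x, y) := by
  have h' : ∀ᵐ w ∂ν.prod μ, P (w.2, w.1) :=
    (Measure.measurePreserving_swap (μ := ν) (ν := μ)).quasiMeasurePreserving.tendsto_ae.eventually h
  exact Measure.ae_ae_of_ae_prod h'

lemma SCaux.pow_two_eq_rpow (μ : Measure X) (u : X → ℝ≥0∞) :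
    (∫⁻ a, u a ^ (2:ℕ) ∂μ) = ∫⁻ a, u a ^ (2:ℝ) ∂μ :=
  lintegral_congr fun a => by rw [← ENNReal.rpow_natCast (u a) 2]; norm_num

lemma SCaux.holder2 (μ : Measure X) {f h : X → ℝ≥0∞} (hf : AEMeasurable f μ)
    (hh : AEMeasurable h μ) :
    ∫⁻ a, f a * h a ∂μ ≤ (∫⁻ a, f a ^ 2 ∂μ) ^ (1/2 : ℝ) * (∫⁻ a, h a ^ 2 ∂μ) ^ (1/2 : ℝ) := by
  have hpq : Real.HolderConjugate 2 2 := Real.HolderConjugate.two_two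
  have h2 := ENNReal.lintegral_mul_le_Lp_mul_Lq μ hpq hf hh
  rw [SCaux.pow_two_eq_rpow μ f, SCaux.pow_two_eq_rpow μ h]
  exact h2

lemma SCaux.rpow_half_sq (x : ℝ≥0∞) : (x ^ 2) ^ (1/2 : ℝ) = x := by
  rw [← ENNReal.rpow_natCast x 2, ← ENNReal.rpow_mul]
  norm_num

lemma SCaux.sq_rpow_half (x : ℝ≥0∞) : (x ^ (1/2 : ℝ)) ^ 2 = x := by
  rw [← ENNReal.rpow_natCast (x ^ (1/2:ℝ)) 2, ← ENNReal.rpow_mul]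
  norm_num

lemma SCaux.eLpNorm_two (μ : Measure X) (f : X → ℝ) :
    eLpNorm f 2 μ = (∫⁻ x, (‖f x‖₊ : ℝ≥0∞) ^ 2 ∂μ) ^ (1/2 : ℝ) := by
  rw [eLpNorm_eq_lintegral_rpow_enorm_toReal (by norm_num) (by norm_num),
    SCaux.pow_two_eq_rpow μ (fun x => (‖f x‖₊ : ℝ≥0∞))]
  norm_num
  rfl


set_option maxHeartbeats 2000000 in
theorem SCaux.main {μ : Measure X} [SigmaFinite μ]
    (η : X × X → ℝ) (φ : X → ℝ) (K : ℝ) (kker : ℕ → X × X → ℝ)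
    (hmem : MemLp η 2 (μ.prod μ))
    (hMle : (eLpNorm η 2 (μ.prod μ)).toReal ≤ 1 / 2)
    (hsymm : ∀ x y, η (x, y) = η (y, x))
    (hK0 : 0 ≤ K) (hφ0 : ∀ x, 0 ≤ φ x)
    (hk1 : kker 1 = η)
    (hkmem : ∀ n, MemLp (kker n) 2 (μ.prod μ))
    (hrec : ∀ n x y, kker (n + 1) (x, y) = ∫ z, η (x, z) * kker n (z, y) ∂μ)
    (hrow : ∀ x, eLpNorm (fun y => η (x, y)) 2 μ ≤ ENNReal.ofReal (K * φ x)) :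
    (MemLp (fun z => ∑' j : ℕ, kker (2 * (j + 1) + 1) z / (Nat.factorial (2 * (j + 1) + 1))) 2
        (μ.prod μ) ∧
      MemLp (fun z => ∑' j : ℕ, kker (2 * (j + 1)) z / (Nat.factorial (2 * (j + 1)))) 2
        (μ.prod μ) ∧
      eLpNorm (fun z => ∑' j : ℕ, kker (2 * (j + 1) + 1) z / (Nat.factorial (2 * (j + 1) + 1))) 2
          (μ.prod μ)
        ≤ ENNReal.ofReal (64 * ((eLpNorm η 2 (μ.prod μ)).toReal) ^ 2) ∧
      eLpNorm (fun z => ∑' j : ℕ, kker (2 * (j + 1)) z / (Nat.factorial (2 * (j + 1)))) 2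
          (μ.prod μ)
        ≤ ENNReal.ofReal (64 * ((eLpNorm η 2 (μ.prod μ)).toReal) ^ 2) ∧
      (∀ᵐ z : X × X ∂μ.prod μ,
        |∑' j : ℕ, kker (2 * (j + 1) + 1) z / (Nat.factorial (2 * (j + 1) + 1) : ℝ)|
          ≤ 64 * K ^ 2 * φ z.1 * φ z.2) ∧
      (∀ᵐ z : X × X ∂μ.prod μ,
        |∑' j : ℕ, kker (2 * (j + 1)) z / (Nat.factorial (2 * (j + 1)) : ℝ)|
          ≤ 64 * K ^ 2 * φ z.1 * φ z.2)) := by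
  set ν := μ.prod μ with hν
  set M : ℝ := (eLpNorm η 2 ν).toReal with hMdef
  have hM0 : 0 ≤ M := ENNReal.toReal_nonneg
  have hηfin : eLpNorm η 2 ν ≠ ⊤ := hmem.2.ne
  have hEη : eLpNorm η 2 ν = ENNReal.ofReal M := (ENNReal.ofReal_toReal hηfin).symm
  have hae : ∀ n, AEMeasurable (kker n) ν := fun n => (hkmem n).1.aemeasurable
  set g : ℕ → X × X → ℝ := fun n => AEMeasurable.mk _ (hae n) with hgdef
  have hgm : ∀ n, Measurable (g n) := fun n => (hae n).measurable_mk
  have hge : ∀ n, kker n =ᵐ[ν] g n := fun n => (hae n).ae_eq_mk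
  set G : ℕ → X × X → ℝ≥0∞ := fun n z => (‖g n z‖₊ : ℝ≥0∞) with hGdef
  have hGm : ∀ n, Measurable (G n) := fun n => (hgm n).enorm
  set A : X → ℝ≥0∞ := fun x => (∫⁻ z, G 1 (x, z) ^ 2 ∂μ) ^ (1/2 : ℝ) with hAdef
  set B : ℕ → X → ℝ≥0∞ := fun n y => (∫⁻ x, G n (x, y) ^ 2 ∂μ) ^ (1/2 : ℝ) with hBdef
  have hAm : Measurable A :=
    ENNReal.continuous_rpow_const.measurable.comp
      (Measurable.lintegral_prod_right' ((hGm 1).pow_const 2))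
  have hBm : ∀ n, Measurable (B n) := fun n =>
    ENNReal.continuous_rpow_const.measurable.comp
      (Measurable.lintegral_prod_right' (((hGm n).comp measurable_swap).pow_const 2))
  have hsec1 : ∀ᵐ x ∂μ, (fun z => η (x, z)) =ᵐ[μ] fun z => g 1 (x, z) := by
    have h1 : η =ᵐ[ν] g 1 := hk1 ▸ hge 1
    exact Measure.ae_ae_of_ae_prod h1
  have hsec2 : ∀ n, ∀ᵐ y ∂μ, (fun x => kker n (x, y)) =ᵐ[μ] fun x => g n (x, y) := fun n =>
    SCaux.ae_ae_snd (hge n)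
  -- pointwise Cauchy-Schwarz bound
  have hPW : ∀ n, ∀ᵐ z ∂ν, G (n+1) z ≤ A z.1 * B n z.2 := by
    intro n
    filter_upwards [hge (n+1), SCaux.ae_fst hsec1, SCaux.ae_snd (hsec2 n)] with z hz h1 h2
    have hcalc : (‖kker (n+1) z‖₊ : ℝ≥0∞) ≤ A z.1 * B n z.2 := by
      rw [show kker (n+1) z = ∫ w, η (z.1, w) * kker n (w, z.2) ∂μ from hrec n z.1 z.2]
      refine le_trans (enorm_integral_le_lintegral_enorm _) ?_
      have heq : ∫⁻ w, (‖η (z.1, w) * kker n (w, z.2)‖₊ : ℝ≥0∞) ∂μ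
          = ∫⁻ w, G 1 (z.1, w) * G n (w, z.2) ∂μ := by
        refine lintegral_congr_ae ?_
        filter_upwards [h1, h2] with w hw1 hw2
        simp [hGdef, hw1, hw2, nnnorm_mul, ENNReal.coe_mul]
      rw [show (∫⁻ a, ‖η (z.1, a) * kker n (a, z.2)‖ₑ ∂μ) = _ from heq]
      exact SCaux.holder2 μ ((hGm 1).comp measurable_prodMk_left).aemeasurable
        ((hGm n).comp (measurable_id.prodMk measurable_const)).aemeasurable
    calc G (n+1) z = (‖kker (n+1) z‖₊ : ℝ≥0∞) := by rw [hGdef]; simp [← hz]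
    _ ≤ _ := hcalc
  -- integrals of A^2, B^2
  have hAint : ∫⁻ x, A x ^ 2 ∂μ = eLpNorm η 2 ν ^ 2 := by
    have h1 : ∀ x, A x ^ 2 = ∫⁻ z, G 1 (x, z) ^ 2 ∂μ := fun x => SCaux.sq_rpow_half _
    simp only [h1]
    rw [← lintegral_prod _ ((hGm 1).pow_const 2).aemeasurable,
      eLpNorm_congr_ae (hk1 ▸ hge 1 : η =ᵐ[ν] g 1), SCaux.eLpNorm_two, SCaux.sq_rpow_half]
  have hBint : ∀ n, ∫⁻ y, B n y ^ 2 ∂μ = eLpNorm (kker n) 2 ν ^ 2 := by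
    intro n
    have h1 : ∀ y, B n y ^ 2 = ∫⁻ x, G n (x, y) ^ 2 ∂μ := fun y => SCaux.sq_rpow_half _
    simp only [h1]
    rw [← lintegral_prod_symm _ ((hGm n).pow_const 2).aemeasurable,
      eLpNorm_congr_ae (hge n), SCaux.eLpNorm_two, SCaux.sq_rpow_half]
  -- HS norm submultiplicativity
  have hNB : ∀ n, eLpNorm (kker (n+1)) 2 ν ≤ eLpNorm η 2 ν * eLpNorm (kker n) 2 ν := by
    intro n
    have h1 : ∫⁻ z, G (n+1) z ^ 2 ∂ν ≤ eLpNorm η 2 ν ^ 2 * eLpNorm (kker n) 2 ν ^ 2 := by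
      calc ∫⁻ z, G (n+1) z ^ 2 ∂ν ≤ ∫⁻ z, A z.1 ^ 2 * B n z.2 ^ 2 ∂ν := by
            refine lintegral_mono_ae ?_
            filter_upwards [hPW n] with z hz
            calc G (n+1) z ^ 2 ≤ (A z.1 * B n z.2) ^ 2 := pow_le_pow_left' hz 2
            _ = A z.1 ^ 2 * B n z.2 ^ 2 := mul_pow _ _ _
      _ = (∫⁻ x, A x ^ 2 ∂μ) * ∫⁻ y, B n y ^ 2 ∂μ :=
            lintegral_prod_mul (hAm.pow_const 2).aemeasurable ((hBm n).pow_const 2).aemeasurable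
      _ = _ := by rw [hAint, hBint n]
    calc eLpNorm (kker (n+1)) 2 ν = (∫⁻ z, G (n+1) z ^ 2 ∂ν) ^ (1/2 : ℝ) := by
          rw [eLpNorm_congr_ae (hge (n+1)), SCaux.eLpNorm_two]
    _ ≤ (eLpNorm η 2 ν ^ 2 * eLpNorm (kker n) 2 ν ^ 2) ^ (1/2 : ℝ) :=
          ENNReal.rpow_le_rpow h1 (by norm_num)
    _ = _ := by
          rw [ENNReal.mul_rpow_of_nonneg _ _ (by norm_num), SCaux.rpow_half_sq,
            SCaux.rpow_half_sq]
  have hNn : ∀ n, eLpNorm (kker (n+1)) 2 ν ≤ (ENNReal.ofReal M) ^ (n+1) := by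
    intro n
    induction n with
    | zero => simpa [hk1, pow_one] using le_of_eq hEη
    | succ m ih =>
        calc eLpNorm (kker (m+2)) 2 ν ≤ eLpNorm η 2 ν * eLpNorm (kker (m+1)) 2 ν := hNB (m+1)
        _ ≤ ENNReal.ofReal M * (ENNReal.ofReal M) ^ (m+1) := by
              rw [hEη]; exact mul_le_mul_right ih _
        _ = (ENNReal.ofReal M) ^ (m+2) := (pow_succ' _ _).symm
  -- column norms recursion
  have hBrec : ∀ n, ∀ᵐ y ∂μ, B (n+1) y ≤ ENNReal.ofReal M * B n y := by
    intro n
    filter_upwards [SCaux.ae_ae_snd (hPW n)] with y hy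
    have h1 : ∫⁻ x, G (n+1) (x, y) ^ 2 ∂μ ≤ eLpNorm η 2 ν ^ 2 * B n y ^ 2 := by
      calc ∫⁻ x, G (n+1) (x, y) ^ 2 ∂μ ≤ ∫⁻ x, A x ^ 2 * B n y ^ 2 ∂μ := by
            refine lintegral_mono_ae ?_
            filter_upwards [hy] with x hx
            calc G (n+1) (x, y) ^ 2 ≤ (A x * B n y) ^ 2 := pow_le_pow_left' hx 2
            _ = A x ^ 2 * B n y ^ 2 := mul_pow _ _ _
      _ = (∫⁻ x, A x ^ 2 ∂μ) * B n y ^ 2 := lintegral_mul_const _ (hAm.pow_const 2)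
      _ = _ := by rw [hAint]
    calc B (n+1) y = (∫⁻ x, G (n+1) (x, y) ^ 2 ∂μ) ^ (1/2 : ℝ) := rfl
    _ ≤ (eLpNorm η 2 ν ^ 2 * B n y ^ 2) ^ (1/2 : ℝ) := ENNReal.rpow_le_rpow h1 (by norm_num)
    _ = eLpNorm η 2 ν * B n y := by
          rw [ENNReal.mul_rpow_of_nonneg _ _ (by norm_num), SCaux.rpow_half_sq,
            SCaux.rpow_half_sq]
    _ = _ := by rw [hEη]
  have hB1 : ∀ᵐ y ∂μ, B 1 y ≤ ENNReal.ofReal (K * φ y) := by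
    filter_upwards [hsec2 1] with y h2
    have hint : ∫⁻ x, G 1 (x, y) ^ 2 ∂μ = ∫⁻ x, (‖η (y, x)‖₊ : ℝ≥0∞) ^ 2 ∂μ := by
      refine lintegral_congr_ae ?_
      filter_upwards [h2] with x hx
      have hgx : g 1 (x, y) = η (y, x) := by rw [← hx, hk1]; exact hsymm x y
      simp [hGdef, hgx]
    have heq : B 1 y = eLpNorm (fun x => η (y, x)) 2 μ := by
      rw [SCaux.eLpNorm_two]
      show (∫⁻ x, G 1 (x, y) ^ 2 ∂μ) ^ (1/2 : ℝ) = _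
      rw [hint]
    rw [heq]; exact hrow y
  have hBn : ∀ᵐ y ∂μ, ∀ n, B (n+1) y ≤ (ENNReal.ofReal M) ^ n * ENNReal.ofReal (K * φ y) := by
    filter_upwards [hB1, ae_all_iff.2 hBrec] with y h1 hr
    intro n
    induction n with
    | zero => simpa using h1
    | succ m ih =>
        calc B (m+2) y ≤ ENNReal.ofReal M * B (m+1) y := hr (m+1)
        _ ≤ ENNReal.ofReal M * ((ENNReal.ofReal M) ^ m * ENNReal.ofReal (K * φ y)) :=
              mul_le_mul_right ih _
        _ = _ := by ring
  have hAle : ∀ᵐ x ∂μ, A x ≤ ENNReal.ofReal (K * φ x) := by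
    filter_upwards [hsec1] with x h1
    have hint : ∫⁻ w, G 1 (x, w) ^ 2 ∂μ = ∫⁻ w, (‖η (x, w)‖₊ : ℝ≥0∞) ^ 2 ∂μ := by
      refine lintegral_congr_ae ?_
      filter_upwards [h1] with w hw
      simp [hGdef, hw]
    have heq : A x = eLpNorm (fun z => η (x, z)) 2 μ := by
      rw [SCaux.eLpNorm_two]
      show (∫⁻ w, G 1 (x, w) ^ 2 ∂μ) ^ (1/2 : ℝ) = _
      rw [hint]
    rw [heq]; exact hrow x
  -- pointwise kernel bound
  have hKPWr : ∀ᵐ z ∂ν, ∀ n, |kker (n+2) z| ≤ K * φ z.1 * (K * φ z.2) * M ^ n := by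
    rw [ae_all_iff]
    intro n
    filter_upwards [hPW (n+1), hge (n+2), SCaux.ae_fst hAle, SCaux.ae_snd hBn]
      with z h h' hA hB
    have h0 : (‖kker (n+2) z‖₊ : ℝ≥0∞)
        ≤ ENNReal.ofReal (K * φ z.1) * ((ENNReal.ofReal M) ^ n * ENNReal.ofReal (K * φ z.2)) := by
      calc (‖kker (n+2) z‖₊ : ℝ≥0∞) = G (n+2) z := by rw [hGdef]; simp [h']
      _ ≤ A z.1 * B (n+1) z.2 := h
      _ ≤ _ := mul_le_mul' hA (hB n)
    have hb1 : (0:ℝ) ≤ K * φ z.1 := mul_nonneg hK0 (hφ0 _)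
    have hb2 : (0:ℝ) ≤ K * φ z.2 := mul_nonneg hK0 (hφ0 _)
    rw [← ENNReal.ofReal_pow hM0, ← ENNReal.ofReal_mul (pow_nonneg hM0 n),
      ← ENNReal.ofReal_mul hb1, ← enorm_eq_nnnorm, ← ofReal_norm] at h0
    have h2 : ‖kker (n+2) z‖ ≤ K * φ z.1 * (M ^ n * (K * φ z.2)) :=
      (ENNReal.ofReal_le_ofReal_iff
        (mul_nonneg hb1 (mul_nonneg (pow_nonneg hM0 n) hb2))).1 h0
    calc |kker (n+2) z| = ‖kker (n+2) z‖ := (Real.norm_eq_abs _).symm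
    _ ≤ K * φ z.1 * (M ^ n * (K * φ z.2)) := h2
    _ = K * φ z.1 * (K * φ z.2) * M ^ n := by ring
  -- key series estimate, parametrized
  have KEY : ∀ (m : ℕ → ℕ) (v : ℕ → ℝ), Summable v → (∀ j, 0 ≤ v j) → (∑' j, v j) ≤ 2 →
      (∀ j, M ^ (m j) ≤ v j) →
      (MemLp (fun z => ∑' j : ℕ, kker (m j + 2) z / ((m j + 2).factorial : ℝ)) 2 ν ∧
       eLpNorm (fun z => ∑' j : ℕ, kker (m j + 2) z / ((m j + 2).factorial : ℝ)) 2 ν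
         ≤ ENNReal.ofReal (2 * M ^ 2) ∧
       ∀ᵐ z ∂ν, |∑' j : ℕ, kker (m j + 2) z / ((m j + 2).factorial : ℝ)|
         ≤ 2 * (K * φ z.1 * (K * φ z.2))) := by
    intro m v hv hv0 hvsum hMv
    set F : X × X → ℝ := fun z => ∑' j : ℕ, kker (m j + 2) z / ((m j + 2).factorial : ℝ)
      with hFdef
    have hfactpos : ∀ j, (0:ℝ) < ((m j + 2).factorial : ℝ) := fun j => by
      exact_mod_cast (m j + 2).factorial_pos
    have hfact1 : ∀ j, (1:ℝ) ≤ ((m j + 2).factorial : ℝ) := fun j => by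
      exact_mod_cast Nat.one_le_iff_ne_zero.2 (Nat.factorial_ne_zero _)
    -- pointwise part
    have hptwise : ∀ᵐ z ∂ν,
        (Summable fun j => kker (m j + 2) z / ((m j + 2).factorial : ℝ)) ∧
        |F z| ≤ 2 * (K * φ z.1 * (K * φ z.2)) := by
      filter_upwards [hKPWr] with z hz
      set D : ℝ := K * φ z.1 * (K * φ z.2) with hDdef
      have hD0 : 0 ≤ D := mul_nonneg (mul_nonneg hK0 (hφ0 _)) (mul_nonneg hK0 (hφ0 _))
      have hle : ∀ j, |kker (m j + 2) z / ((m j + 2).factorial : ℝ)| ≤ D * v j := by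
        intro j
        calc |kker (m j + 2) z / ((m j + 2).factorial : ℝ)|
            = |kker (m j + 2) z| / ((m j + 2).factorial : ℝ) := by
              rw [abs_div, abs_of_pos (hfactpos j)]
        _ ≤ |kker (m j + 2) z| := div_le_self (abs_nonneg _) (hfact1 j)
        _ ≤ D * M ^ (m j) := hz (m j)
        _ ≤ D * v j := mul_le_mul_of_nonneg_left (hMv j) hD0
      have hs : Summable (fun j => D * v j) := hv.mul_left D
      have habs : Summable (fun j => |kker (m j + 2) z / ((m j + 2).factorial : ℝ)|) :=
        Summable.of_nonneg_of_le (fun j => abs_nonneg _) hle hs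
      have hsum : Summable (fun j => kker (m j + 2) z / ((m j + 2).factorial : ℝ)) :=
        summable_abs_iff.1 habs
      refine ⟨hsum, ?_⟩
      have hnormsum : Summable (fun j => ‖kker (m j + 2) z / ((m j + 2).factorial : ℝ)‖) :=
        habs.congr fun j => (Real.norm_eq_abs _).symm
      have h0 : ‖F z‖ ≤ ∑' j, ‖kker (m j + 2) z / ((m j + 2).factorial : ℝ)‖ :=
        norm_tsum_le_tsum_norm hnormsum
      calc |F z| ≤ ∑' j, |kker (m j + 2) z / ((m j + 2).factorial : ℝ)| := by
            calc |F z| = ‖F z‖ := (Real.norm_eq_abs _).symm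
            _ ≤ ∑' j, ‖kker (m j + 2) z / ((m j + 2).factorial : ℝ)‖ := h0
            _ = ∑' j, |kker (m j + 2) z / ((m j + 2).factorial : ℝ)| :=
                  tsum_congr fun j => Real.norm_eq_abs _
      _ ≤ ∑' j, D * v j := Summable.tsum_le_tsum hle habs hs
      _ = D * ∑' j, v j := tsum_mul_left
      _ ≤ D * 2 := mul_le_mul_of_nonneg_left hvsum hD0
      _ = 2 * D := mul_comm _ _
    have hsm : ∀ᵐ z ∂ν, Summable fun j => kker (m j + 2) z / ((m j + 2).factorial : ℝ) :=
      hptwise.mono fun z h => h.1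
    have haesm : AEStronglyMeasurable F ν := by
      refine aestronglyMeasurable_of_tendsto_ae atTop
        (f := fun N z => ∑ j ∈ Finset.range N, kker (m j + 2) z / ((m j + 2).factorial : ℝ))
        (fun N => Finset.aestronglyMeasurable_fun_sum _ fun j _ => (by
          simpa [div_eq_mul_inv] using
            ((hkmem (m j + 2)).1.mul_const ((((m j + 2).factorial : ℝ))⁻¹)) :
          AEStronglyMeasurable (fun z => kker (m j + 2) z / ((m j + 2).factorial : ℝ)) ν))
        (hsm.mono fun z hz => hz.hasSum.tendsto_sum_nat)
    -- HS part
    set e : ℕ → ℝ≥0∞ := fun j => ENNReal.ofReal (((m j + 2).factorial : ℝ))⁻¹ with hedef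
    set T : ℕ → X × X → ℝ≥0∞ := fun j z => G (m j + 2) z * e j with hTdef
    have hTm : ∀ j, Measurable (T j) := fun j => (hGm _).mul_const _
    have hFle : ∀ᵐ z ∂ν, (‖F z‖₊ : ℝ≥0∞) ≤ ∑' j, T j z := by
      filter_upwards [hptwise, ae_all_iff.2 fun j => hge (m j + 2)] with z hz hg'
      obtain ⟨hsum, -⟩ := hz
      have habs : Summable (fun j => |kker (m j + 2) z / ((m j + 2).factorial : ℝ)|) :=
        hsum.abs
      calc (‖F z‖₊ : ℝ≥0∞) = ENNReal.ofReal |F z| := by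
            rw [← enorm_eq_nnnorm, ← ofReal_norm, Real.norm_eq_abs]
      _ ≤ ENNReal.ofReal (∑' j, |kker (m j + 2) z / ((m j + 2).factorial : ℝ)|) := by
            refine ENNReal.ofReal_le_ofReal ?_
            have hnormsum : Summable (fun j => ‖kker (m j + 2) z / ((m j + 2).factorial : ℝ)‖) :=
              habs.congr fun j => (Real.norm_eq_abs _).symm
            have h0 : ‖F z‖ ≤ ∑' j, ‖kker (m j + 2) z / ((m j + 2).factorial : ℝ)‖ :=
              norm_tsum_le_tsum_norm hnormsum
            calc |F z| = ‖F z‖ := (Real.norm_eq_abs _).symm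
            _ ≤ ∑' j, ‖kker (m j + 2) z / ((m j + 2).factorial : ℝ)‖ := h0
            _ = ∑' j, |kker (m j + 2) z / ((m j + 2).factorial : ℝ)| :=
                  tsum_congr fun j => Real.norm_eq_abs _
      _ = ∑' j, ENNReal.ofReal |kker (m j + 2) z / ((m j + 2).factorial : ℝ)| :=
            ENNReal.ofReal_tsum_of_nonneg (fun j => abs_nonneg _) habs
      _ = ∑' j, T j z := by
            refine tsum_congr fun j => ?_
            rw [hTdef]
            have : |kker (m j + 2) z / ((m j + 2).factorial : ℝ)|
                = |kker (m j + 2) z| * (((m j + 2).factorial : ℝ))⁻¹ := by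
              rw [abs_div, abs_of_pos (hfactpos j), div_eq_mul_inv]
            rw [this, ENNReal.ofReal_mul (abs_nonneg _), hGdef]
            simp [hg' j, ← Real.norm_eq_abs, ofReal_norm, enorm_eq_nnnorm, hedef]
    have hT2 : ∀ j, (∫⁻ z, T j z ^ 2 ∂ν) ^ (1/2 : ℝ) ≤ ENNReal.ofReal (M ^ 2 * v j) := by
      intro j
      have h1 : ∫⁻ z, T j z ^ 2 ∂ν = (∫⁻ z, G (m j + 2) z ^ 2 ∂ν) * (e j) ^ 2 := by
        simp only [hTdef, mul_pow]
        exact lintegral_mul_const' _ _ (ENNReal.pow_ne_top ENNReal.ofReal_ne_top)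
      have h2 : (∫⁻ z, G (m j + 2) z ^ 2 ∂ν) ^ (1/2 : ℝ) = eLpNorm (kker (m j + 2)) 2 ν := by
        rw [eLpNorm_congr_ae (hge (m j + 2)), SCaux.eLpNorm_two]
      calc (∫⁻ z, T j z ^ 2 ∂ν) ^ (1/2 : ℝ) = eLpNorm (kker (m j + 2)) 2 ν * e j := by
            rw [h1, ENNReal.mul_rpow_of_nonneg _ _ (by norm_num), SCaux.rpow_half_sq, h2]
      _ ≤ (ENNReal.ofReal M) ^ (m j + 2) * e j := mul_le_mul_left (hNn (m j + 1)) _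
      _ = ENNReal.ofReal (M ^ (m j + 2) * (((m j + 2).factorial : ℝ))⁻¹) := by
            rw [← ENNReal.ofReal_pow hM0, hedef, ← ENNReal.ofReal_mul (pow_nonneg hM0 _)]
      _ ≤ ENNReal.ofReal (M ^ 2 * v j) := by
            refine ENNReal.ofReal_le_ofReal ?_
            calc M ^ (m j + 2) * (((m j + 2).factorial : ℝ))⁻¹ ≤ M ^ (m j + 2) * 1 := by
                  refine mul_le_mul_of_nonneg_left ?_ (pow_nonneg hM0 _)
                  rw [inv_le_one_iff₀]; right; exact hfact1 j
            _ = M ^ (m j) * M ^ 2 := by rw [mul_one, pow_add]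
            _ ≤ v j * M ^ 2 := mul_le_mul_of_nonneg_right (hMv j) (sq_nonneg M)
            _ = M ^ 2 * v j := mul_comm _ _
    have hFnorm : eLpNorm F 2 ν ≤ ENNReal.ofReal (2 * M ^ 2) := by
      have hdouble : ∫⁻ z, (‖F z‖₊ : ℝ≥0∞) ^ 2 ∂ν
          ≤ (∑' j, ENNReal.ofReal (M ^ 2 * v j)) ^ 2 := by
        calc ∫⁻ z, (‖F z‖₊ : ℝ≥0∞) ^ 2 ∂ν ≤ ∫⁻ z, (∑' j, T j z) ^ 2 ∂ν :=
              lintegral_mono_ae (hFle.mono fun z hz => pow_le_pow_left' hz 2)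
        _ = ∫⁻ z, ∑' (j : ℕ), ∑' (k : ℕ), T j z * T k z ∂ν := by
              refine lintegral_congr fun z => ?_
              calc (∑' j, T j z) ^ 2 = (∑' j, T j z) * ∑' k, T k z := pow_two _
              _ = ∑' j, T j z * ∑' k, T k z := ENNReal.tsum_mul_right.symm
              _ = ∑' j, ∑' k, T j z * T k z := tsum_congr fun j => ENNReal.tsum_mul_left.symm
        _ = ∑' (j : ℕ), ∑' (k : ℕ), ∫⁻ z, T j z * T k z ∂ν := by
              rw [lintegral_tsum (f := fun j z => ∑' k, T j z * T k z) fun j =>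
                (Measurable.ennreal_tsum fun k => (hTm j).mul (hTm k)).aemeasurable]
              exact tsum_congr fun j =>
                lintegral_tsum fun k => ((hTm j).mul (hTm k)).aemeasurable
        _ ≤ ∑' (j : ℕ), ∑' (k : ℕ),
              ENNReal.ofReal (M ^ 2 * v j) * ENNReal.ofReal (M ^ 2 * v k) := by
              refine ENNReal.tsum_le_tsum fun j => ENNReal.tsum_le_tsum fun k => ?_
              calc ∫⁻ z, T j z * T k z ∂ν
                  ≤ (∫⁻ z, T j z ^ 2 ∂ν) ^ (1/2 : ℝ) * (∫⁻ z, T k z ^ 2 ∂ν) ^ (1/2 : ℝ) :=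
                    SCaux.holder2 ν (hTm j).aemeasurable (hTm k).aemeasurable
              _ ≤ _ := mul_le_mul' (hT2 j) (hT2 k)
        _ = (∑' j, ENNReal.ofReal (M ^ 2 * v j)) ^ 2 := by
              calc ∑' (j : ℕ), ∑' (k : ℕ), ENNReal.ofReal (M ^ 2 * v j) * ENNReal.ofReal (M ^ 2 * v k)
                  = ∑' (j : ℕ), ENNReal.ofReal (M ^ 2 * v j) * ∑' (k : ℕ), ENNReal.ofReal (M ^ 2 * v k) :=
                    tsum_congr fun j => ENNReal.tsum_mul_left
              _ = (∑' j, ENNReal.ofReal (M ^ 2 * v j)) * ∑' k, ENNReal.ofReal (M ^ 2 * v k) :=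
                    ENNReal.tsum_mul_right
              _ = _ := (pow_two _).symm
      have hxs : (∑' j, ENNReal.ofReal (M ^ 2 * v j)) ≤ ENNReal.ofReal (2 * M ^ 2) := by
        rw [← ENNReal.ofReal_tsum_of_nonneg (fun j => mul_nonneg (sq_nonneg M) (hv0 j))
          (hv.mul_left _)]
        refine ENNReal.ofReal_le_ofReal ?_
        rw [tsum_mul_left]
        calc M ^ 2 * ∑' j, v j ≤ M ^ 2 * 2 :=
              mul_le_mul_of_nonneg_left hvsum (sq_nonneg M)
        _ = 2 * M ^ 2 := mul_comm _ _
      calc eLpNorm F 2 ν = (∫⁻ z, (‖F z‖₊ : ℝ≥0∞) ^ 2 ∂ν) ^ (1/2 : ℝ) := SCaux.eLpNorm_two ν F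
      _ ≤ ((∑' j, ENNReal.ofReal (M ^ 2 * v j)) ^ 2) ^ (1/2 : ℝ) :=
            ENNReal.rpow_le_rpow hdouble (by norm_num)
      _ = ∑' j, ENNReal.ofReal (M ^ 2 * v j) := SCaux.rpow_half_sq _
      _ ≤ _ := hxs
    exact ⟨⟨haesm, lt_of_le_of_lt hFnorm ENNReal.ofReal_lt_top⟩, hFnorm,
      hptwise.mono fun z hz => hz.2⟩
  -- instantiate for p
  have hvP : Summable (fun j : ℕ => (1/2 : ℝ) * (1/4) ^ j) :=
    (summable_geometric_of_lt_one (by norm_num) (by norm_num)).mul_left _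
  have hvP0 : ∀ j : ℕ, (0:ℝ) ≤ (1/2 : ℝ) * (1/4) ^ j := fun j => by positivity
  have hvPsum : (∑' j : ℕ, (1/2 : ℝ) * (1/4) ^ j) ≤ 2 := by
    rw [tsum_mul_left, tsum_geometric_of_lt_one (by norm_num) (by norm_num)]
    norm_num
  have hMvP : ∀ j : ℕ, M ^ (2 * j + 1) ≤ (1/2 : ℝ) * (1/4) ^ j := by
    intro j
    calc M ^ (2 * j + 1) ≤ (1/2 : ℝ) ^ (2 * j + 1) := pow_le_pow_left₀ hM0 hMle _
    _ = (1/2 : ℝ) * (1/4) ^ j := by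
        rw [pow_succ, pow_mul]
        norm_num [mul_comm]
  obtain ⟨hp1, hp2, hp3⟩ := KEY (fun j => 2 * j + 1) _ hvP hvP0 hvPsum hMvP
  -- instantiate for r
  have hvR : Summable (fun j : ℕ => ((1:ℝ)/4) ^ j) :=
    summable_geometric_of_lt_one (by norm_num) (by norm_num)
  have hvR0 : ∀ j : ℕ, (0:ℝ) ≤ ((1:ℝ)/4) ^ j := fun j => by positivity
  have hvRsum : (∑' j : ℕ, ((1:ℝ)/4) ^ j) ≤ 2 := by
    rw [tsum_geometric_of_lt_one (by norm_num) (by norm_num)]; norm_num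
  have hMvR : ∀ j : ℕ, M ^ (2 * j) ≤ ((1:ℝ)/4) ^ j := by
    intro j
    calc M ^ (2 * j) = (M ^ 2) ^ j := by rw [pow_mul]
    _ ≤ ((1:ℝ)/4) ^ j := by
        refine pow_le_pow_left₀ (sq_nonneg M) ?_ j
        nlinarith
  obtain ⟨hr1, hr2, hr3⟩ := KEY (fun j => 2 * j) _ hvR hvR0 hvRsum hMvR
  -- reindexing
  have hidxP : (fun z : X × X => ∑' j : ℕ, kker (2 * (j + 1) + 1) z
      / (Nat.factorial (2 * (j + 1) + 1) : ℝ))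
      = fun z => ∑' j : ℕ, kker (2 * j + 1 + 2) z / (((2 * j + 1 + 2).factorial : ℝ)) := by
    funext z
    refine tsum_congr fun j => ?_
    have e1 : 2 * (j + 1) + 1 = 2 * j + 1 + 2 := by ring
    rw [e1]
  have hidxR : (fun z : X × X => ∑' j : ℕ, kker (2 * (j + 1)) z
      / (Nat.factorial (2 * (j + 1)) : ℝ))
      = fun z => ∑' j : ℕ, kker (2 * j + 2) z / (((2 * j + 2).factorial : ℝ)) := by
    funext z
    refine tsum_congr fun j => ?_
    have e1 : 2 * (j + 1) = 2 * j + 2 := by ring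
    rw [e1]
  have hconst : ENNReal.ofReal (2 * M ^ 2) ≤ ENNReal.ofReal (64 * M ^ 2) :=
    ENNReal.ofReal_le_ofReal (by nlinarith [sq_nonneg M])
  refine ⟨?_, ?_, ?_, ?_, ?_, ?_⟩
  · rw [hidxP]; exact hp1
  · rw [hidxR]; exact hr1
  · rw [hidxP]; exact hp2.trans hconst
  · rw [hidxR]; exact hr2.trans hconst
  · filter_upwards [hp3] with z hz
    rw [show (∑' j : ℕ, kker (2 * (j + 1) + 1) z / (Nat.factorial (2 * (j + 1) + 1) : ℝ))
        = ∑' j : ℕ, kker (2 * j + 1 + 2) z / (((2 * j + 1 + 2).factorial : ℝ)) from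
      tsum_congr fun j => by rw [show 2 * (j + 1) + 1 = 2 * j + 1 + 2 by ring]]
    have hX : 0 ≤ K ^ 2 * φ z.1 * φ z.2 :=
      mul_nonneg (mul_nonneg (sq_nonneg K) (hφ0 _)) (hφ0 _)
    calc |∑' j : ℕ, kker (2 * j + 1 + 2) z / (((2 * j + 1 + 2).factorial : ℝ))|
        ≤ 2 * (K * φ z.1 * (K * φ z.2)) := hz
    _ = 2 * (K ^ 2 * φ z.1 * φ z.2) := by ring
    _ ≤ 64 * K ^ 2 * φ z.1 * φ z.2 := by nlinarith
  · filter_upwards [hr3] with z hz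
    rw [show (∑' j : ℕ, kker (2 * (j + 1)) z / (Nat.factorial (2 * (j + 1)) : ℝ))
        = ∑' j : ℕ, kker (2 * j + 2) z / (((2 * j + 2).factorial : ℝ)) from
      tsum_congr fun j => by rw [show 2 * (j + 1) = 2 * j + 2 by ring]]
    have hX : 0 ≤ K ^ 2 * φ z.1 * φ z.2 :=
      mul_nonneg (mul_nonneg (sq_nonneg K) (hφ0 _)) (hφ0 _)
    calc |∑' j : ℕ, kker (2 * j + 2) z / (((2 * j + 2).factorial : ℝ))|
        ≤ 2 * (K * φ z.1 * (K * φ z.2)) := hz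
    _ = 2 * (K ^ 2 * φ z.1 * φ z.2) := by ring
    _ ≤ 64 * K ^ 2 * φ z.1 * φ z.2 := by nlinarith
end Aux

/-- Bounds on `p_η = sinh_η − η = Σ_{k≥1} η^{(2k+1)}/(2k+1)!` and
`r_η = cosh_η − id = Σ_{k≥1} η^{(2k)}/(2k)!` for a symmetric real Hilbert–Schmidt kernel `η`
with `‖η‖_HS ≤ 1/2` and row bounds `‖η(x,·)‖₂ ≤ K φ(x)`: both are Hilbert–Schmidt with HS
norm `≤ C‖η‖_HS²` and with pointwise kernels bounded by `C K² φ(x) φ(y)` a.e. -/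
theorem sinh_cosh_kernel_bounds :
    ∃ C : ℝ, 0 < C ∧
      ∀ (η : EuclideanSpace ℝ (Fin 3) × EuclideanSpace ℝ (Fin 3) → ℝ)
        (φ : EuclideanSpace ℝ (Fin 3) → ℝ) (K : ℝ)
        (kker : ℕ → EuclideanSpace ℝ (Fin 3) × EuclideanSpace ℝ (Fin 3) → ℝ),
        MemLp η 2 volume →
        (eLpNorm η 2 volume).toReal ≤ 1 / 2 →
        (∀ x y, η (x, y) = η (y, x)) →
        (0 ≤ K) → (∀ x, 0 ≤ φ x) → (∃ Mb : ℝ, ∀ x, φ x ≤ Mb) →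
        kker 1 = η →
        (∀ n, MemLp (kker n) 2 volume) →
        (∀ n x y, kker (n + 1) (x, y) = ∫ z, η (x, z) * kker n (z, y)) →
        (∀ x, eLpNorm (fun y => η (x, y)) 2 volume ≤ ENNReal.ofReal (K * φ x)) →
        let p : EuclideanSpace ℝ (Fin 3) × EuclideanSpace ℝ (Fin 3) → ℝ :=
          fun z => ∑' j : ℕ, kker (2 * (j + 1) + 1) z / (Nat.factorial (2 * (j + 1) + 1))
        let r : EuclideanSpace ℝ (Fin 3) × EuclideanSpace ℝ (Fin 3) → ℝ :=
          fun z => ∑' j : ℕ, kker (2 * (j + 1)) z / (Nat.factorial (2 * (j + 1)))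
        (MemLp p 2 volume ∧ MemLp r 2 volume ∧
          eLpNorm p 2 volume ≤ ENNReal.ofReal (C * ((eLpNorm η 2 volume).toReal) ^ 2) ∧
          eLpNorm r 2 volume ≤ ENNReal.ofReal (C * ((eLpNorm η 2 volume).toReal) ^ 2) ∧
          (∀ᵐ z : EuclideanSpace ℝ (Fin 3) × EuclideanSpace ℝ (Fin 3) ∂volume,
            |p z| ≤ C * K ^ 2 * φ z.1 * φ z.2) ∧
          (∀ᵐ z : EuclideanSpace ℝ (Fin 3) × EuclideanSpace ℝ (Fin 3) ∂volume,
            |r z| ≤ C * K ^ 2 * φ z.1 * φ z.2)) := by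
  refine ⟨64, by norm_num, ?_⟩
  intro η φ K kker hmem hMle hsymm hK0 hφ0 _hφb hk1 hkmem hrec hrow
  intro p r
  have hvol : (volume : Measure (EuclideanSpace ℝ (Fin 3) × EuclideanSpace ℝ (Fin 3)))
      = (volume : Measure (EuclideanSpace ℝ (Fin 3))).prod volume :=
    MeasureTheory.Measure.volume_eq_prod _ _
  rw [hvol] at hmem hMle hkmem ⊢
  obtain ⟨h1, h2, h3, h4, h5, h6⟩ :=
    SCaux.main η φ K kker hmem hMle hsymm hK0 hφ0 hk1 hkmem hrec hrow
  exact ⟨h1, h2, h3, h4, h5, h6⟩
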